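/- K ⊨_l ¬enc(P) ∨ enc(P') over all finite paths of K if and only if K_ι ⊨_l ¬enc_ι(P) ∨ enc_ι(P') over all infinite paths of K_ι. -/

import Mathlib

set_option autoImplicit true

section IFCIL

variable {N O S A Pr : Type}

/-- Node patterns: a concrete node or the wildcard `*`. -/
inductive NodePat (N : Type) where
  | star : NodePat N
  | node : N → NodePat N

/-- An arc of an information flow diagram: source, nonempty set of operations, target. -/
abbrev Arc (N O : Type) := N × Set O × N

/-- An information flow diagram `I = (N, ta, E)`. -/
structure IFD (N O : Type) where
  ta : N → Set N
  E : Set (Arc N O)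

/-- A node pattern `m` matches a node `n`: `m = *` or `n ∈ ta(m)`. -/
def NodePat.mat (I : IFD N O) : NodePat N → N → Prop
  | .star, _ => True
  | .node m, n => n ∈ I.ta m

/-- Consecutive arcs have matching endpoints. -/
def Chained : List (Arc N O) → Prop
  | [] => True
  | [_] => True
  | a :: b :: rest => a.2.2 = b.1 ∧ Chained (b :: rest)

/-- A path in `I`: nonempty, chained sequence of arcs of `I`. -/
def PathIn (I : IFD N O) (π : List (Arc N O)) : Prop :=
  π ≠ [] ∧ Chained π ∧ ∀ a ∈ π, a ∈ I.E

/-- Arrows: single step `>` or multi step `+>`. -/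
inductive Arrow where
  | single : Arrow
  | multi : Arrow

/-- Path kinds `P ::= n [o]> n' | n +[o]> n' | P₁ P₂`. -/
inductive Kind (N O : Type) where
  | atom : NodePat N → Arrow → Set O → NodePat N → Kind N O
  | comp : Kind N O → Kind N O → Kind N O

/-- The kind satisfaction relation `π ▷_I P`. -/
inductive KSat (I : IFD N O) : List (Arc N O) → Kind N O → Prop where
  | step : NodePat.mat I m n → NodePat.mat I m' n' → (o ∩ o').Nonempty →
      KSat I [(n, o, n')] (.atom m .single o' m')
  | plusBase : KSat I [(n, o, n')] (.atom m .single o' m') →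
      KSat I [(n, o, n')] (.atom m .multi o' m')
  | plusStep : KSat I [(n, o, n')] (.atom m .single o' .star) →
      KSat I π (.atom .star .multi o' m') →
      KSat I ((n, o, n') :: π) (.atom m .multi o' m')
  | comp : KSat I π₁ P₁ → KSat I π₂ P₂ → KSat I (π₁ ++ π₂) (.comp P₁ P₂)

/-- Node refinement: `n ⪯_n n` and `n ⪯_n *`. -/
def NRef : NodePat N → NodePat N → Prop := fun a b => a = b ∨ b = .star

/-- Arrow refinement: reflexivity and `> ⪯_a +>`. -/
inductive ARef : Arrow → Arrow → Prop where
  | refl (a) : ARef a a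
  | up : ARef .single .multi

/-- Kind refinement `⪯_P`: rules (comp), (P-1)–(P-4), closed under reflexivity
and transitivity. -/
inductive KRef : Kind N O → Kind N O → Prop where
  | refl (P) : KRef P P
  | trans : KRef P Q → KRef Q R → KRef P R
  | comp : KRef P₁ P₁' → KRef P₂ P₂' → KRef (.comp P₁ P₂) (.comp P₁' P₂')
  | atom : NRef n₁ n₁' → NRef n₂ n₂' → ARef w w' → o ⊆ o' →
      KRef (.atom n₁ w o n₂) (.atom n₁' w' o' n₂')
  | p2 : NRef n₁ n₁' → NRef n₂ n₂' → o₁ ⊆ o₁' → o₁ ⊆ o₂' → o₂ ⊆ o₂' →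
      KRef (.comp (.atom n₁ .multi o₁ .star) (.atom .star .single o₂ n₂))
           (.comp (.atom n₁' .single o₁' .star) (.atom .star .multi o₂' n₂'))
  | p3 : NRef n₁ n₁' → NRef n₂ n₂' → o₁ ⊆ o' → o₂ ⊆ o' →
      KRef (.comp (.atom n₁ .multi o₁ .star) (.atom .star .multi o₂ n₂))
           (.atom n₁' .multi o' n₂')
  | p4 : NRef n₁ n₁' → NRef n₂ n₂' → o₁ ⊆ o₁' → o₂ ⊆ o₂' → o₂ ⊆ o₁' →
      KRef (.comp (.atom n₁ .single o₁ .star) (.atom .star .multi o₂ n₂))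
           (.comp (.atom n₁' .multi o₁' .star) (.atom .star .single o₂' n₂'))

/-- IFL requirements `R ::= P | ~P | P : P'`. -/
inductive Req (N O : Type) where
  | ex : Kind N O → Req N O
  | no : Kind N O → Req N O
  | constr : Kind N O → Kind N O → Req N O

/-- Validity `I ⊨ R`. -/
def Valid (I : IFD N O) : Req N O → Prop
  | .ex P => ∃ π, PathIn I π ∧ KSat I π P
  | .no P => ¬ ∃ π, PathIn I π ∧ KSat I π P
  | .constr P P' => ∀ π, PathIn I π → KSat I π P → KSat I π P'

/-- Requirement refinement `⪯`: rules (R-1)–(R-3), closed under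
reflexivity and transitivity. -/
inductive RRef : Req N O → Req N O → Prop where
  | refl (R) : RRef R R
  | trans : RRef R₁ R₂ → RRef R₂ R₃ → RRef R₁ R₃
  | ex : KRef P P' → RRef (.ex P) (.ex P')
  | no : KRef P P' → RRef (.no P') (.no P)
  | constr : KRef P₁ P₁' → KRef P₂ P₂' → RRef (.constr P₁' P₂) (.constr P₁ P₂')

/-- The equivalent, right-linear grammar of kinds:
`P ::= n [o]> n' | n +[o]> n' | (n [o]> n') P | (n +[o]> n') P`. -/
inductive LKind (N O : Type) where
  | step : NodePat N → Set O → NodePat N → LKind N O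
  | plus : NodePat N → Set O → NodePat N → LKind N O
  | stepC : NodePat N → Set O → NodePat N → LKind N O → LKind N O
  | plusC : NodePat N → Set O → NodePat N → LKind N O → LKind N O

/-- Kind satisfaction `π ▷_I P` for the right-linear grammar. -/
inductive LSat (I : IFD N O) : List (Arc N O) → LKind N O → Prop where
  | step : NodePat.mat I m n → NodePat.mat I m' n' → (o ∩ o').Nonempty →
      LSat I [(n, o, n')] (.step m o' m')
  | plusBase : LSat I [(n, o, n')] (.step m o' m') →
      LSat I [(n, o, n')] (.plus m o' m')
  | plusStep : LSat I [(n, o, n')] (.step m o' .star) →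
      LSat I π (.plus .star o' m') →
      LSat I ((n, o, n') :: π) (.plus m o' m')
  | stepC : LSat I [(n, o, n')] (.step m o' .star) → LSat I π P →
      LSat I ((n, o, n') :: π) (.stepC m o' m' P)
  | plusCBase : LSat I π (.stepC m o' m' P) → LSat I π (.plusC m o' m' P)
  | plusCStep : LSat I [(n, o, n')] (.step m o' .star) →
      LSat I π (.plusC .star o' .star P) →
      LSat I ((n, o, n') :: π) (.plusC m o' m' P)

/-- LTL formulas over atomic propositions `Pr` and actions `A`;
`acts o` stands for the disjunction `⋁_{op ∈ o} (op)`. -/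
inductive LTL (Pr A : Type) where
  | tt : LTL Pr A
  | atom : Pr → LTL Pr A
  | acts : Set A → LTL Pr A
  | and : LTL Pr A → LTL Pr A → LTL Pr A
  | or : LTL Pr A → LTL Pr A → LTL Pr A
  | not : LTL Pr A → LTL Pr A
  | next : LTL Pr A → LTL Pr A
  | untl : LTL Pr A → LTL Pr A → LTL Pr A

/-- A finite KTS path: a state followed by a list of (action, state) steps. -/
structure FinPath (S A : Type) where
  first : S
  rest : List (A × S)

/-- Drop the first `k` transitions of a finite path. -/
def FinPath.drop : FinPath S A → ℕ → FinPath S A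
  | w, 0 => w
  | ⟨s, []⟩, _ + 1 => ⟨s, []⟩
  | ⟨_, (_, s') :: r⟩, k + 1 => FinPath.drop ⟨s', r⟩ k

/-- Finite-path LTL semantics `w ⊨_l φ` with labeling `L`. -/
def FSat (L : S → Set Pr) : LTL Pr A → FinPath S A → Prop
  | .tt, _ => True
  | .atom p, w => p ∈ L w.first
  | .acts o, w => ∃ a s r, w.rest = (a, s) :: r ∧ a ∈ o
  | .and φ ψ, w => FSat L φ w ∧ FSat L ψ w
  | .or φ ψ, w => FSat L φ w ∨ FSat L ψ w
  | .not φ, w => ¬ FSat L φ w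
  | .next φ, w => ∃ a s r, w.rest = (a, s) :: r ∧ FSat L φ ⟨s, r⟩
  | .untl φ ψ, w => ∃ k, k ≤ w.rest.length ∧ FSat L ψ (w.drop k) ∧
      ∀ j < k, FSat L φ (w.drop j)

/-- The LTL encoding `enc(P)` of flow kinds (finite-path version,
with end marker `¬X(true)`). -/
def encK : LKind N O → LTL (NodePat N) O
  | .step n o n' =>
      .and (.atom n) (.and (.acts o) (.next (.and (.atom n') (.not (.next .tt)))))
  | .plus n o n' =>
      .and (.atom n) (.and (.acts o)
        (.next (.untl (.acts o) (.and (.atom n') (.not (.next .tt))))))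
  | .stepC n o _ P => .and (.atom n) (.and (.acts o) (.next (encK P)))
  | .plusC n o _ P =>
      .and (.atom n) (.and (.acts o) (.next (.untl (.acts o) (encK P))))

/-- The labeling `Λ` of the KTS of `I`: `M ∈ Λ(n)` iff `n ∈ ta(M)`
(with the wildcard true everywhere). -/
def labelOf (I : IFD N O) : N → Set (NodePat N) :=
  fun n => {p | NodePat.mat I p n}

/-- `encRest π r`: the steps `r` traverse the arcs `π` choosing one
operation from each arc's operation set. -/
def encRest : List (Arc N O) → List (O × N) → Prop
  | [], [] => True
  | (_, o, n') :: π, (op, s) :: r => op ∈ o ∧ s = n' ∧ encRest π r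
  | _, _ => False

/-- `w ∈ enc(π)` : the KTS path `w` results from the diagram path `π`
by choosing one operation from each arc's operation set. -/
def encPath (π : List (Arc N O)) (w : FinPath N O) : Prop :=
  match π with
  | [] => False
  | (n, _, _) :: _ => w.first = n ∧ encRest π w.rest

/-- Auxiliary for `π_w`. -/
def diagOf : N → List (O × N) → List (Arc N O)
  | _, [] => []
  | s, (op, s') :: r => (s, ({op} : Set O), s') :: diagOf s' r

/-- `π_w`: the diagram path obtained from a KTS path by replacing each
action `op` with the singleton `{op}`. -/
def FinPath.toDiagram (w : FinPath N O) : List (Arc N O) := diagOf w.first w.rest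

/-- A transition of the KTS of `I`: `E' = {(n, op, n') | (n,o,n') ∈ E, op ∈ o}`. -/
def ktsStep (I : IFD N O) (s : N) (op : O) (s' : N) : Prop :=
  ∃ o, (s, o, s') ∈ I.E ∧ op ∈ o

def ktsRest (I : IFD N O) : N → List (O × N) → Prop
  | _, [] => True
  | s, (op, s') :: r => ktsStep I s op s' ∧ ktsRest I s' r

/-- `w` is a (finite) path of the KTS of `I`. -/
def KTSPath (I : IFD N O) (w : FinPath N O) : Prop := ktsRest I w.first w.rest

/-- `K ⊨_l φ`: every finite path of the KTS of `I` satisfies `φ`. -/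
def KModels (I : IFD N O) (φ : LTL (NodePat N) O) : Prop :=
  ∀ w, KTSPath I w → FSat (labelOf I) φ w

/-- IFL requirements over right-linear kinds. -/
inductive LReq (N O : Type) where
  | ex : LKind N O → LReq N O
  | no : LKind N O → LReq N O
  | constr : LKind N O → LKind N O → LReq N O

/-- Validity `I ⊨ R` for right-linear requirements. -/
def LValid (I : IFD N O) : LReq N O → Prop
  | .ex P => ∃ π, PathIn I π ∧ LSat I π P
  | .no P => ¬ ∃ π, PathIn I π ∧ LSat I π P
  | .constr P P' => ∀ π, PathIn I π → LSat I π P → LSat I π P'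

/-- Satisfaction `K ⊢ R` in the finite-path KTS semantics. -/
def KEnt (I : IFD N O) : LReq N O → Prop
  | .ex P => ¬ KModels I (.not (encK P))
  | .no P => KModels I (.not (encK P))
  | .constr P P' => KModels I (.or (.not (encK P)) (encK P'))

/-- Infinite KTS paths. -/
structure InfPath (S A : Type) where
  state : ℕ → S
  act : ℕ → A

def InfPath.drop (w : InfPath S A) (k : ℕ) : InfPath S A :=
  ⟨fun i => w.state (i + k), fun i => w.act (i + k)⟩

/-- Infinite-path LTL semantics. -/
def ISat (L : S → Set Pr) : LTL Pr A → InfPath S A → Prop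
  | .tt, _ => True
  | .atom p, w => p ∈ L (w.state 0)
  | .acts o, w => w.act 0 ∈ o
  | .and φ ψ, w => ISat L φ w ∧ ISat L ψ w
  | .or φ ψ, w => ISat L φ w ∨ ISat L ψ w
  | .not φ, w => ¬ ISat L φ w
  | .next φ, w => ISat L φ (w.drop 1)
  | .untl φ ψ, w => ∃ k, ISat L ψ (w.drop k) ∧ ∀ j < k, ISat L φ (w.drop j)

/-- Atomic propositions for the sink-extended KTS: node patterns plus
the distinguished proposition `ι`. -/
abbrev SProp (N : Type) := NodePat N ⊕ Unit

/-- Labeling of the sink-extended KTS: the sink (`none`) is labeled only by `ι`. -/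
def labelι (I : IFD N O) : Option N → Set (SProp N)
  | some n => {p | ∃ q, p = Sum.inl q ∧ NodePat.mat I q n}
  | none => {Sum.inr ()}

/-- The encoding `enc_ι(P)` of flow kinds for the sink-extended KTS:
identical to `enc` except that `¬X(true)` is replaced by `X(ι)`. -/
def encι : LKind N O → LTL (SProp N) O
  | .step n o n' =>
      .and (.atom (.inl n)) (.and (.acts o)
        (.next (.and (.atom (.inl n')) (.next (.atom (.inr ()))))))
  | .plus n o n' =>
      .and (.atom (.inl n)) (.and (.acts o)
        (.next (.untl (.acts o) (.and (.atom (.inl n')) (.next (.atom (.inr ())))))))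
  | .stepC n o _ P => .and (.atom (.inl n)) (.and (.acts o) (.next (encι P)))
  | .plusC n o _ P =>
      .and (.atom (.inl n)) (.and (.acts o) (.next (.untl (.acts o) (encι P))))

/-- The states of a finite path. -/
def FinPath.states (w : FinPath S A) : List S := w.first :: w.rest.map Prod.snd

/-- `w·ι^ω`: the finite path `w` followed by the sink forever
(with arbitrary operation labels `ops` into `ι`). -/
def appendSink (w : FinPath N O) (ops : ℕ → O) : InfPath (Option N) O where
  state := fun i => w.states[i]?
  act := fun i => if h : i < w.rest.length then (w.rest.get ⟨i, h⟩).1 else ops i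

/-- Transitions of the sink-extended KTS `K_ι`: the transitions of `K`,
transitions from every state to the sink with every operation, and the
self-loop on the sink. -/
def sinkStep (I : IFD N O) : Option N → O → Option N → Prop
  | some s, op, some s' => ktsStep I s op s'
  | _, _, none => True
  | none, _, some _ => False

/-- `w` is an infinite path of the sink-extended KTS `K_ι`. -/
def KιPath (I : IFD N O) (w : InfPath (Option N) O) : Prop :=
  ∀ i, sinkStep I (w.state i) (w.act i) (w.state (i + 1))

/-- `K_ι ⊨_l φ`: every infinite path of `K_ι` satisfies `φ`. -/
def KιModels (I : IFD N O) (φ : LTL (SProp N) O) : Prop :=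
  ∀ w, KιPath I w → ISat (labelι I) φ w

/-- Satisfaction `K_ι ⊢ R` in the infinite-path, sink-extended semantics. -/
def KιEnt (I : IFD N O) : LReq N O → Prop
  | .ex P => ¬ KιModels I (.not (encι P))
  | .no P => KιModels I (.not (encι P))
  | .constr P P' => KιModels I (.or (.not (encι P)) (encι P'))

/-- The leading node constraint of a kind. -/
def LKind.firstNode : LKind N O → NodePat N
  | .step n _ _ => n
  | .plus n _ _ => n
  | .stepC n _ _ _ => n
  | .plusC n _ _ _ => n

/-- The leading operation set of a kind. -/
def LKind.firstOps : LKind N O → Set O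
  | .step _ o _ => o
  | .plus _ o _ => o
  | .stepC _ o _ _ => o
  | .plusC _ o _ _ => o

end IFCIL
section AuxSink

variable {N O : Type}

lemma InfPath.ext' {S A : Type} {σ τ : InfPath S A}
    (h1 : σ.state = τ.state) (h2 : σ.act = τ.act) : σ = τ := by
  cases σ; cases τ; cases h1; cases h2; rfl

@[simp] lemma InfPath.drop_state' {S A : Type} (σ : InfPath S A) (k i : ℕ) :
    (σ.drop k).state i = σ.state (i + k) := rfl

@[simp] lemma InfPath.drop_act' {S A : Type} (σ : InfPath S A) (k i : ℕ) :
    (σ.drop k).act i = σ.act (i + k) := rfl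

lemma states_length (w : FinPath N O) : w.states.length = w.rest.length + 1 := by
  simp [FinPath.states]

lemma appendSink_state (w : FinPath N O) (ops : ℕ → O) (i : ℕ) :
    (appendSink w ops).state i = w.states[i]? := rfl

lemma state_none_iff (w : FinPath N O) (ops : ℕ → O) (i : ℕ) :
    (appendSink w ops).state i = none ↔ w.rest.length < i := by
  rw [appendSink_state, List.getElem?_eq_none_iff, states_length]
  omega

lemma FinPath.drop_zero (w : FinPath N O) : w.drop 0 = w := by
  obtain ⟨s, r⟩ := w
  cases r with
  | nil => rfl
  | cons p r => obtain ⟨a, t⟩ := p; rfl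

lemma state_zero (w : FinPath N O) (ops : ℕ → O) :
    (appendSink w ops).state 0 = some w.first := by
  rw [appendSink_state]
  show (w.first :: w.rest.map Prod.snd)[0]? = some w.first
  simp

lemma drop_rest : ∀ (k : ℕ) (w : FinPath N O), k ≤ w.rest.length →
    (w.drop k).rest = w.rest.drop k
  | 0, w, _ => by rw [FinPath.drop_zero]; rfl
  | k+1, ⟨_, []⟩, h => absurd h (by simp)
  | k+1, ⟨s, (a,t)::r⟩, h => by
      show ((⟨t, r⟩ : FinPath N O).drop k).rest = r.drop k
      exact drop_rest k ⟨t,r⟩ (by simpa using h)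

lemma drop_states' : ∀ (k : ℕ) (w : FinPath N O), k ≤ w.rest.length →
    (w.drop k).states = w.states.drop k
  | 0, w, _ => by rw [FinPath.drop_zero]; rfl
  | k+1, ⟨_, []⟩, h => absurd h (by simp)
  | k+1, ⟨s, (a,t)::r⟩, h => by
      show ((⟨t, r⟩ : FinPath N O).drop k).states = ((⟨t, r⟩ : FinPath N O).states).drop k
      exact drop_states' k ⟨t,r⟩ (by simpa using h)

lemma appendSink_drop (w : FinPath N O) (ops : ℕ → O) (k : ℕ) (hk : k ≤ w.rest.length) :
    (appendSink w ops).drop k = appendSink (w.drop k) (fun i => ops (i + k)) := by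
  apply InfPath.ext'
  · funext i
    show w.states[i + k]? = (w.drop k).states[i]?
    rw [drop_states' k w hk, List.getElem?_drop, Nat.add_comm]
  · funext i
    have hlen : (w.drop k).rest.length = w.rest.length - k := by
      rw [drop_rest k w hk]; simp
    show (if h : i + k < w.rest.length then (w.rest.get ⟨i+k, h⟩).1 else ops (i+k))
      = (if h : i < (w.drop k).rest.length then ((w.drop k).rest.get ⟨i,h⟩).1 else ops (i + k))
    by_cases hi : i + k < w.rest.length
    · have hi' : i < (w.drop k).rest.length := by omega
      rw [dif_pos hi, dif_pos hi']
      congr 1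
      simp only [List.get_eq_getElem]
      have : (w.drop k).rest[i]'hi' = (w.rest.drop k)[i]'(by rw [← drop_rest k w hk]; exact hi') := by
        congr 1
        exact drop_rest k w hk
      rw [this, List.getElem_drop]
      congr 1
      omega
    · have hi' : ¬ i < (w.drop k).rest.length := by omega
      rw [dif_neg hi, dif_neg hi']

@[simp] lemma inl_mem_labelι_some {I : IFD N O} {q : NodePat N} {n : N} :
    Sum.inl q ∈ labelι I (some n) ↔ NodePat.mat I q n := by
  simp [labelι]

@[simp] lemma inl_not_mem_labelι_none {I : IFD N O} {q : NodePat N} :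
    Sum.inl q ∉ labelι I (none : Option N) := by
  simp [labelι]

@[simp] lemma inr_mem_labelι {I : IFD N O} {x : Option N} :
    Sum.inr () ∈ labelι I x ↔ x = none := by
  cases x <;> simp [labelι]

lemma not_isat_encι_none (I : IFD N O) (Q : LKind N O) (σ : InfPath (Option N) O)
    (h : σ.state 0 = none) : ¬ ISat (labelι I) (encι Q) σ := by
  cases Q <;>
  · intro hs
    have h1 : Sum.inl _ ∈ labelι I (σ.state 0) := hs.1
    rw [h] at h1
    exact inl_not_mem_labelι_none h1

lemma encι_eventually_none (I : IFD N O) (Q : LKind N O) :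
    ∀ σ : InfPath (Option N) O, ISat (labelι I) (encι Q) σ → ∃ m, σ.state m = none := by
  induction Q with
  | step n o n' =>
    intro σ hs
    have h : Sum.inr () ∈ labelι I (σ.state 2) := hs.2.2.2
    exact ⟨2, inr_mem_labelι.mp h⟩
  | plus n o n' =>
    intro σ hs
    obtain ⟨k, hk, -⟩ := hs.2.2
    have h : Sum.inr () ∈ labelι I (σ.state (0 + 1 + k + 1)) := hk.2
    exact ⟨_, inr_mem_labelι.mp h⟩
  | stepC n o m P ih =>
    intro σ hs
    obtain ⟨j, hj⟩ := ih (σ.drop 1) hs.2.2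
    exact ⟨j + 1, hj⟩
  | plusC n o m P ih =>
    intro σ hs
    obtain ⟨k, hk, -⟩ := hs.2.2
    obtain ⟨j, hj⟩ := ih ((σ.drop 1).drop k) hk
    exact ⟨j + k + 1, hj⟩

lemma atom_iff (I : IFD N O) (q : NodePat N) (w : FinPath N O) (ops : ℕ → O) :
    FSat (labelOf I) (.atom q) w ↔ ISat (labelι I) (.atom (.inl q)) (appendSink w ops) := by
  show q ∈ labelOf I w.first ↔ Sum.inl q ∈ labelι I ((appendSink w ops).state 0)
  rw [state_zero]
  simp [labelOf]

lemma fsat_acts_cons (I : IFD N O) (o : Set O) (s : N) (a : O) (t : N) (r : List (O × N)) :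
    FSat (labelOf I) (.acts o) ⟨s, (a,t)::r⟩ ↔ a ∈ o := by
  constructor
  · rintro ⟨a', t', r', he, ha⟩
    simp only [List.cons.injEq, Prod.mk.injEq] at he
    obtain ⟨⟨rfl, rfl⟩, rfl⟩ := he
    exact ha
  · intro h; exact ⟨a, t, r, rfl, h⟩

lemma appendSink_act_zero (s : N) (a : O) (t : N) (r : List (O × N)) (ops : ℕ → O) :
    (appendSink ⟨s, (a,t)::r⟩ ops).act 0 = a := by
  show (if h : 0 < ((a,t)::r).length then ((((a,t)::r)).get ⟨0, h⟩).1 else ops 0) = a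
  rw [dif_pos (by simp)]
  rfl

lemma acts_iff (I : IFD N O) (o : Set O) (s : N) (a : O) (t : N) (r : List (O×N)) (ops : ℕ → O) :
    FSat (labelOf I) (.acts o) ⟨s,(a,t)::r⟩ ↔
      ISat (labelι I) (.acts o) (appendSink ⟨s,(a,t)::r⟩ ops) := by
  rw [fsat_acts_cons]
  show _ ↔ (appendSink (⟨s,(a,t)::r⟩ : FinPath N O) ops).act 0 ∈ o
  rw [appendSink_act_zero]

lemma acts_hφ (I : IFD N O) (o : Set O) :
    ∀ (w : FinPath N O) (ops : ℕ → O), w.rest ≠ [] →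
      (FSat (labelOf I) (.acts o) w ↔ ISat (labelι I) (.acts o) (appendSink w ops)) := by
  rintro ⟨s, rest⟩ ops hne
  cases rest with
  | nil => simp at hne
  | cons p r => obtain ⟨a,t⟩ := p; exact acts_iff I o s a t r ops

lemma fsat_next_cons {S A Pr : Type} (L : S → Set Pr) (X : LTL Pr A) (s : S) (a : A) (t : S)
    (r : List (A × S)) :
    FSat L (.next X) ⟨s, (a,t)::r⟩ ↔ FSat L X ⟨t, r⟩ := by
  constructor
  · rintro ⟨a', t', r', he, h⟩
    simp only [List.cons.injEq, Prod.mk.injEq] at he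
    obtain ⟨⟨rfl, rfl⟩, rfl⟩ := he
    exact h
  · intro h; exact ⟨a, t, r, rfl, h⟩

lemma fsat_end_iff (I : IFD N O) (n' : NodePat N) (w : FinPath N O) :
    FSat (labelOf I) (.and (.atom n') (.not (.next .tt))) w ↔
      NodePat.mat I n' w.first ∧ w.rest = [] := by
  constructor
  · rintro ⟨h1, h2⟩
    refine ⟨h1, ?_⟩
    cases hr : w.rest with
    | nil => rfl
    | cons p r => exact absurd ⟨p.1, p.2, r, by rw [hr], trivial⟩ h2
  · rintro ⟨h1, h2⟩
    refine ⟨h1, ?_⟩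
    rintro ⟨a, t, r, he, -⟩
    rw [h2] at he
    simp at he

lemma isat_end_iff (I : IFD N O) (n' : NodePat N) (w : FinPath N O) (ops : ℕ → O) :
    ISat (labelι I) (.and (.atom (.inl n')) (.next (.atom (.inr ())))) (appendSink w ops) ↔
      NodePat.mat I n' w.first ∧ w.rest = [] := by
  have h1 : ISat (labelι I) (.atom (.inl n')) (appendSink w ops) ↔ NodePat.mat I n' w.first := by
    show Sum.inl n' ∈ labelι I ((appendSink w ops).state 0) ↔ _
    rw [state_zero]; simp
  have h2 : ISat (labelι I) (.next (.atom (.inr ()))) (appendSink w ops) ↔ w.rest = [] := by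
    show Sum.inr () ∈ labelι I ((appendSink w ops).state (0 + 1)) ↔ _
    rw [inr_mem_labelι, state_none_iff]
    constructor
    · intro h; cases hr : w.rest with
      | nil => rfl
      | cons p r => rw [hr] at h; simp at h
    · intro h; rw [h]; simp
  exact and_congr h1 h2

lemma end_hψn (I : IFD N O) (n' : NodePat N) (σ : InfPath (Option N) O)
    (h : σ.state 0 = none) :
    ¬ ISat (labelι I) (.and (.atom (.inl n')) (.next (.atom (.inr ())))) σ := by
  intro hs
  have h1 : Sum.inl n' ∈ labelι I (σ.state 0) := hs.1
  rw [h] at h1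
  exact inl_not_mem_labelι_none h1

lemma untl_iff (I : IFD N O) (φ' ψ' : LTL (NodePat N) O) (φ ψ : LTL (SProp N) O)
    (hφ : ∀ (w : FinPath N O) (ops : ℕ → O), w.rest ≠ [] →
        (FSat (labelOf I) φ' w ↔ ISat (labelι I) φ (appendSink w ops)))
    (hψ : ∀ (w : FinPath N O) (ops : ℕ → O),
        FSat (labelOf I) ψ' w ↔ ISat (labelι I) ψ (appendSink w ops))
    (hψn : ∀ σ : InfPath (Option N) O, σ.state 0 = none → ¬ ISat (labelι I) ψ σ)
    (w : FinPath N O) (ops : ℕ → O) :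
    FSat (labelOf I) (.untl φ' ψ') w ↔ ISat (labelι I) (.untl φ ψ) (appendSink w ops) := by
  constructor
  · rintro ⟨k, hk, hkψ, hkφ⟩
    refine ⟨k, ?_, ?_⟩
    · show ISat (labelι I) ψ ((appendSink w ops).drop k)
      rw [appendSink_drop w ops k hk]
      exact (hψ _ _).mp hkψ
    · intro j hj
      show ISat (labelι I) φ ((appendSink w ops).drop j)
      rw [appendSink_drop w ops j (le_trans (le_of_lt hj) hk)]
      refine (hφ _ _ ?_).mp (hkφ j hj)
      rw [drop_rest j w (le_trans (le_of_lt hj) hk)]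
      intro hnil
      rw [List.drop_eq_nil_iff] at hnil
      omega
  · rintro ⟨k, hkψ, hkφ⟩
    have hk : k ≤ w.rest.length := by
      by_contra hk
      push_neg at hk
      refine hψn ((appendSink w ops).drop k) ?_ hkψ
      show (appendSink w ops).state (0 + k) = none
      rw [Nat.zero_add, state_none_iff]
      omega
    refine ⟨k, hk, ?_, ?_⟩
    · rw [appendSink_drop w ops k hk] at hkψ
      exact (hψ _ _).mpr hkψ
    · intro j hj
      have hjk : j ≤ w.rest.length := by omega
      have hh := hkφ j hj
      rw [appendSink_drop w ops j hjk] at hh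
      refine (hφ _ _ ?_).mpr hh
      rw [drop_rest j w hjk]
      intro hnil
      rw [List.drop_eq_nil_iff] at hnil
      omega

lemma sink_drop_one (s : N) (a : O) (t : N) (r : List (O × N)) (ops : ℕ → O) :
    (appendSink ⟨s, (a,t)::r⟩ ops).drop 1 = appendSink ⟨t, r⟩ (fun i => ops (i+1)) := by
  have h := appendSink_drop ⟨s,(a,t)::r⟩ ops 1 (by simp)
  rw [h]
  congr 1

lemma fsat_encK_rest_ne (I : IFD N O) (P : LKind N O) (w : FinPath N O)
    (h : FSat (labelOf I) (encK P) w) : ∃ a t r, w.rest = (a,t)::r := by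
  cases P <;>
  · obtain ⟨a, t, r, he, -⟩ := h.2.1
    exact ⟨a, t, r, he⟩

lemma main_iff (I : IFD N O) (P : LKind N O) :
    ∀ (w : FinPath N O) (ops : ℕ → O),
      FSat (labelOf I) (encK P) w ↔ ISat (labelι I) (encι P) (appendSink w ops) := by
  induction P with
  | step n o n' =>
    rintro ⟨s, rest⟩ ops
    cases rest with
    | nil =>
      apply iff_of_false
      · intro h
        obtain ⟨a, t, r, he⟩ := fsat_encK_rest_ne I (.step n o n') _ h
        simp at he
      · intro h
        have h1 : Sum.inl n' ∈
            labelι I ((appendSink (⟨s, []⟩ : FinPath N O) ops).state 1) := h.2.2.1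
        rw [(state_none_iff _ _ _).mpr (by simp)] at h1
        exact inl_not_mem_labelι_none h1
    | cons p r =>
      obtain ⟨a, t⟩ := p
      show (FSat (labelOf I) (.atom n) _ ∧ FSat (labelOf I) (.acts o) _ ∧
          FSat (labelOf I) (.next (.and (.atom n') (.not (.next .tt)))) _) ↔
        (ISat (labelι I) (.atom (.inl n)) _ ∧ ISat (labelι I) (.acts o) _ ∧
          ISat (labelι I) (.next (.and (.atom (.inl n')) (.next (.atom (.inr ()))))) _)
      refine and_congr (atom_iff I n _ ops) (and_congr (acts_iff I o s a t r ops) ?_)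
      rw [fsat_next_cons]
      show _ ↔ ISat (labelι I) (.and (.atom (.inl n')) (.next (.atom (.inr ()))))
          ((appendSink (⟨s,(a,t)::r⟩ : FinPath N O) ops).drop 1)
      rw [sink_drop_one, fsat_end_iff, isat_end_iff]
  | plus n o n' =>
    rintro ⟨s, rest⟩ ops
    cases rest with
    | nil =>
      apply iff_of_false
      · intro h
        obtain ⟨a, t, r, he⟩ := fsat_encK_rest_ne I (.plus n o n') _ h
        simp at he
      · intro h
        obtain ⟨k, hk, -⟩ := h.2.2
        refine end_hψn I n' _ ?_ hk
        show (appendSink (⟨s, []⟩ : FinPath N O) ops).state (0 + k + 1) = none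
        rw [state_none_iff]
        simp
    | cons p r =>
      obtain ⟨a, t⟩ := p
      show (FSat (labelOf I) (.atom n) _ ∧ FSat (labelOf I) (.acts o) _ ∧
          FSat (labelOf I) (.next (.untl (.acts o) (.and (.atom n') (.not (.next .tt))))) _) ↔
        (ISat (labelι I) (.atom (.inl n)) _ ∧ ISat (labelι I) (.acts o) _ ∧
          ISat (labelι I) (.next (.untl (.acts o)
            (.and (.atom (.inl n')) (.next (.atom (.inr ())))))) _)
      refine and_congr (atom_iff I n _ ops) (and_congr (acts_iff I o s a t r ops) ?_)
      rw [fsat_next_cons]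
      show _ ↔ ISat (labelι I) (.untl (.acts o)
          (.and (.atom (.inl n')) (.next (.atom (.inr ())))))
          ((appendSink (⟨s,(a,t)::r⟩ : FinPath N O) ops).drop 1)
      rw [sink_drop_one]
      exact untl_iff I (.acts o) (.and (.atom n') (.not (.next .tt))) (.acts o)
        (.and (.atom (.inl n')) (.next (.atom (.inr ()))))
        (acts_hφ I o)
        (fun w ops => (fsat_end_iff I n' w).trans (isat_end_iff I n' w ops).symm)
        (end_hψn I n') ⟨t, r⟩ _
  | stepC n o m P ih =>
    rintro ⟨s, rest⟩ ops
    cases rest with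
    | nil =>
      apply iff_of_false
      · intro h
        obtain ⟨a, t, r, he⟩ := fsat_encK_rest_ne I (.stepC n o m P) _ h
        simp at he
      · intro h
        have h3 : ISat (labelι I) (encι P)
            ((appendSink (⟨s, []⟩ : FinPath N O) ops).drop 1) := h.2.2
        refine not_isat_encι_none I P _ ?_ h3
        show (appendSink (⟨s, []⟩ : FinPath N O) ops).state (0 + 1) = none
        rw [state_none_iff]; simp
    | cons p r =>
      obtain ⟨a, t⟩ := p
      show (FSat (labelOf I) (.atom n) _ ∧ FSat (labelOf I) (.acts o) _ ∧
          FSat (labelOf I) (.next (encK P)) _) ↔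
        (ISat (labelι I) (.atom (.inl n)) _ ∧ ISat (labelι I) (.acts o) _ ∧
          ISat (labelι I) (.next (encι P)) _)
      refine and_congr (atom_iff I n _ ops) (and_congr (acts_iff I o s a t r ops) ?_)
      rw [fsat_next_cons]
      show _ ↔ ISat (labelι I) (encι P)
          ((appendSink (⟨s,(a,t)::r⟩ : FinPath N O) ops).drop 1)
      rw [sink_drop_one]
      exact ih ⟨t, r⟩ _
  | plusC n o m P ih =>
    rintro ⟨s, rest⟩ ops
    cases rest with
    | nil =>
      apply iff_of_false
      · intro h
        obtain ⟨a, t, r, he⟩ := fsat_encK_rest_ne I (.plusC n o m P) _ h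
        simp at he
      · intro h
        obtain ⟨k, hk, -⟩ := h.2.2
        refine not_isat_encι_none I P _ ?_ hk
        show (appendSink (⟨s, []⟩ : FinPath N O) ops).state (0 + k + 1) = none
        rw [state_none_iff]; simp
    | cons p r =>
      obtain ⟨a, t⟩ := p
      show (FSat (labelOf I) (.atom n) _ ∧ FSat (labelOf I) (.acts o) _ ∧
          FSat (labelOf I) (.next (.untl (.acts o) (encK P))) _) ↔
        (ISat (labelι I) (.atom (.inl n)) _ ∧ ISat (labelι I) (.acts o) _ ∧
          ISat (labelι I) (.next (.untl (.acts o) (encι P))) _)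
      refine and_congr (atom_iff I n _ ops) (and_congr (acts_iff I o s a t r ops) ?_)
      rw [fsat_next_cons]
      show _ ↔ ISat (labelι I) (.untl (.acts o) (encι P))
          ((appendSink (⟨s,(a,t)::r⟩ : FinPath N O) ops).drop 1)
      rw [sink_drop_one]
      exact untl_iff I (.acts o) (encK P) (.acts o) (encι P)
        (acts_hφ I o) (fun w ops => ih w ops) (not_isat_encι_none I P) ⟨t, r⟩ _

lemma ktsRest_states (I : IFD N O) :
    ∀ (l : List (O × N)) (s : N), ktsRest I s l →
      ∀ i p, l[i]? = some p →
        ∃ u, (s :: l.map Prod.snd)[i]? = some u ∧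
             (s :: l.map Prod.snd)[i+1]? = some p.2 ∧ ktsStep I u p.1 p.2 := by
  intro l
  induction l with
  | nil => intro s _ i p hp; simp at hp
  | cons q tl ih =>
    obtain ⟨op, t⟩ := q
    intro s hr i p hp
    obtain ⟨h1, h2⟩ : ktsStep I s op t ∧ ktsRest I t tl := hr
    cases i with
    | zero =>
      simp only [List.getElem?_cons_zero, Option.some.injEq] at hp
      subst hp
      exact ⟨s, by simp, by simp, h1⟩
    | succ i =>
      have hp' : tl[i]? = some p := by simpa using hp
      obtain ⟨u, hu1, hu2, hstep⟩ := ih t h2 i p hp'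
      exact ⟨u, by simpa using hu1, by simpa using hu2, hstep⟩

lemma kιpath_appendSink (I : IFD N O) (w : FinPath N O) (hw : KTSPath I w) (ops : ℕ → O) :
    KιPath I (appendSink w ops) := by
  intro i
  by_cases hi : i < w.rest.length
  · have hp : w.rest[i]? = some (w.rest[i]'hi) := List.getElem?_eq_getElem hi
    obtain ⟨u, hu1, hu2, hstep⟩ := ktsRest_states I w.rest w.first hw i _ hp
    have hact : (appendSink w ops).act i = (w.rest[i]'hi).1 := by
      show (if h : i < w.rest.length then (w.rest.get ⟨i,h⟩).1 else ops i) = _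
      rw [dif_pos hi, List.get_eq_getElem]
    have hs1 : (appendSink w ops).state i = some u := hu1
    have hs2 : (appendSink w ops).state (i+1) = some (w.rest[i]'hi).2 := hu2
    show sinkStep I ((appendSink w ops).state i) ((appendSink w ops).act i)
      ((appendSink w ops).state (i+1))
    rw [hs1, hs2, hact]
    exact hstep
  · have h2 : (appendSink w ops).state (i+1) = none := (state_none_iff _ _ _).mpr (by omega)
    show sinkStep I ((appendSink w ops).state i) ((appendSink w ops).act i)
      ((appendSink w ops).state (i+1))
    rw [h2]
    cases (appendSink w ops).state i <;> trivial

lemma sink_upward (I : IFD N O) (σ : InfPath (Option N) O) (hσ : KιPath I σ)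
    (i : ℕ) (h : σ.state i = none) : ∀ j, i ≤ j → σ.state j = none := by
  intro j
  induction j with
  | zero =>
    intro hj
    have hi0 : i = 0 := Nat.le_zero.mp hj
    rw [hi0] at h; exact h
  | succ j ih =>
    intro hj
    rcases Nat.lt_or_ge j i with hji | hji
    · have : i = j + 1 := by omega
      rw [this] at h; exact h
    · have hj' := ih hji
      have hstep := hσ j
      rw [hj'] at hstep
      cases hc : σ.state (j+1) with
      | none => rfl
      | some t =>
        rw [hc] at hstep
        exact False.elim hstep

lemma ktsRest_of (I : IFD N O) (σ : InfPath (Option N) O) (hσ : KιPath I σ) :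
    ∀ (l : List (O × N)) (k : ℕ) (s : N), σ.state k = some s →
      (∀ i, (h : i < l.length) →
        σ.act (k+i) = (l.get ⟨i,h⟩).1 ∧ σ.state (k+i+1) = some (l.get ⟨i,h⟩).2) →
      ktsRest I s l := by
  intro l
  induction l with
  | nil => intro k s _ _; trivial
  | cons p tl ih =>
    obtain ⟨op, t⟩ := p
    intro k s hk hsteps
    obtain ⟨ha, hs⟩ := hsteps 0 (by simp)
    rw [Nat.add_zero] at ha hs
    refine ⟨?_, ?_⟩
    · have hstep := hσ k
      rw [hk, ha, hs] at hstep
      exact hstep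
    · refine ih (k+1) t hs ?_
      intro i hi
      have h2 := hsteps (i+1) (by simpa using Nat.succ_lt_succ hi)
      rw [show k + (i+1) = k + 1 + i by omega] at h2
      exact h2

lemma exists_fin (I : IFD N O) (σ : InfPath (Option N) O) (hσ : KιPath I σ)
    (s0 : N) (h0 : σ.state 0 = some s0) (hn : ∃ m, σ.state m = none) :
    ∃ (w : FinPath N O) (ops : ℕ → O), KTSPath I w ∧ σ = appendSink w ops := by
  classical
  set m := Nat.find hn with hmdef
  have hm : σ.state m = none := Nat.find_spec hn
  have hlt : ∀ i, i < m → σ.state i ≠ none := fun i hi => Nat.find_min hn hi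
  have hm0 : 0 < m := by
    rcases Nat.eq_zero_or_pos m with h | h
    · rw [h] at hm; rw [hm] at h0; exact absurd h0 (by simp)
    · exact h
  set rest : List (O × N) :=
    (List.range (m-1)).map (fun i => (σ.act i, (σ.state (i+1)).getD s0)) with hrest
  have hrl : rest.length = m - 1 := by simp [hrest]
  have hget : ∀ i (h : i < rest.length),
      rest.get ⟨i, h⟩ = (σ.act i, (σ.state (i+1)).getD s0) := by
    intro i h
    simp [hrest]
  refine ⟨⟨s0, rest⟩, σ.act, ?_, ?_⟩
  · refine ktsRest_of I σ hσ rest 0 s0 h0 ?_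
    intro i hi
    have hi' : i < m - 1 := by rw [← hrl]; exact hi
    have hsome : σ.state (i+1) ≠ none := hlt _ (by omega)
    obtain ⟨x, hx⟩ := Option.ne_none_iff_exists'.mp hsome
    rw [hget i hi]
    constructor
    · rw [Nat.zero_add]
    · rw [Nat.zero_add, hx]
      simp
  · apply InfPath.ext'
    · funext i
      show σ.state i = (⟨s0, rest⟩ : FinPath N O).states[i]?
      rcases Nat.lt_or_ge i m with hi | hi
      · cases i with
        | zero =>
          rw [h0]
          show _ = (s0 :: rest.map Prod.snd)[0]?
          simp
        | succ j =>
          have hj : j < m - 1 := by omega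
          have hsome : σ.state (j+1) ≠ none := hlt _ hi
          obtain ⟨x, hx⟩ := Option.ne_none_iff_exists'.mp hsome
          rw [hx]
          show some x = (s0 :: rest.map Prod.snd)[j+1]?
          rw [List.getElem?_cons_succ]
          simp [hrest, hj, hx]
      · rw [sink_upward I σ hσ m hm i hi]
        symm
        rw [List.getElem?_eq_none_iff, states_length]
        show (⟨s0, rest⟩ : FinPath N O).rest.length + 1 ≤ i
        rw [hrl]
        omega
    · funext i
      show σ.act i =
        (if h : i < (⟨s0, rest⟩ : FinPath N O).rest.length
          then ((⟨s0, rest⟩ : FinPath N O).rest.get ⟨i,h⟩).1 else σ.act i)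
      by_cases hi : i < rest.length
      · rw [dif_pos hi, hget i hi]
      · rw [dif_neg hi]

end AuxSink
/-- `K ⊨_l ¬enc(P) ∨ enc(P')` over all finite paths of `K` iff
`K_ι ⊨_l ¬enc_ι(P) ∨ enc_ι(P')` over all infinite paths of `K_ι`. -/
theorem constr_fin_iff_sink {N O : Type} (I : IFD N O) (P P' : LKind N O) :
    KModels I (.or (.not (encK P)) (encK P')) ↔
      KιModels I (.or (.not (encι P)) (encι P')) := by
  constructor
  · intro hK σ hσ
    by_cases hP : ISat (labelι I) (encι P) σ
    · have h0 : ∃ s, σ.state 0 = some s := by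
        cases hh : σ.state 0 with
        | none => exact absurd hP (not_isat_encι_none I P σ hh)
        | some s => exact ⟨s, rfl⟩
      obtain ⟨s0, hs0⟩ := h0
      have hn := encι_eventually_none I P σ hP
      obtain ⟨w, ops, hw, rfl⟩ := exists_fin I σ hσ s0 hs0 hn
      have hf : FSat (labelOf I) (encK P) w := (main_iff I P w ops).mpr hP
      have hor : FSat (labelOf I) (.not (encK P)) w ∨ FSat (labelOf I) (encK P') w :=
        hK w hw
      rcases hor with h | h
      · exact absurd hf h
      · exact Or.inr ((main_iff I P' w ops).mp h)
    · exact Or.inl hP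
  · intro hK w hw
    by_cases hP : FSat (labelOf I) (encK P) w
    · obtain ⟨a, t, r, hr⟩ := fsat_encK_rest_ne I P w hP
      have hσ : KιPath I (appendSink w (fun _ => a)) := kιpath_appendSink I w hw _
      have hor : ISat (labelι I) (.not (encι P)) (appendSink w (fun _ => a)) ∨
          ISat (labelι I) (encι P') (appendSink w (fun _ => a)) := hK _ hσ
      rcases hor with h | h
      · exact absurd ((main_iff I P w _).mp hP) h
      · exact Or.inr ((main_iff I P' w _).mpr h)
    · exact Or.inl hP
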